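/- Let T be an invertible bounded operator on ℓ¹(I) (I countable) such that both T and T⁻¹ have nonnegative matrix entries in the standard Schauder basis (e_i). Then T is a generalized permutation: there exist a permutation σ of I and positive reals λ_i such that T e_i = λ_i e_{σ(i)} for all i. -/

import Mathlib

open scoped ENNReal

private noncomputable def evalCLM' {I : Type*} (i : I) :
    lp (fun _ : I => ℂ) 1 →L[ℂ] ℂ :=
  LinearMap.mkContinuous
    { toFun := fun f => f i
      map_add' := fun f g => rfl
      map_smul' := fun c f => rfl }
    1 (fun f => by change ‖f i‖ ≤ 1 * ‖f‖; simpa using lp.norm_apply_le_norm one_ne_zero f i)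

private theorem evalCLM'_apply {I : Type*} (i : I) (f : lp (fun _ : I => ℂ) 1) :
    evalCLM' i f = f i := rfl

private theorem hasSum_entry {I : Type*} [DecidableEq I] [Fact ((1 : ℝ≥0∞) ≤ 1)]
    (U : lp (fun _ : I => ℂ) 1 →L[ℂ] lp (fun _ : I => ℂ) 1)
    (v : lp (fun _ : I => ℂ) 1) (i : I) :
    HasSum (fun k => v k * ((U (lp.single 1 k 1)) i)) ((U v) i) := by
  have h1 := lp.hasSum_single (E := fun _ : I => ℂ) (p := 1) (by norm_num) v
  have h2 := ((evalCLM' i).comp U).hasSum h1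
  simp only [ContinuousLinearMap.coe_comp', Function.comp_apply] at h2
  rw [evalCLM'_apply] at h2
  convert h2 using 2 with k
  have hs : lp.single (E := fun _ : I => ℂ) 1 k (v k) = v k • lp.single 1 k 1 := by
    rw [← lp.single_smul]
    norm_num
  rw [hs, map_smul, evalCLM'_apply, lp.coeFn_smul]
  rfl

/-- The key matrix identity: entries of the product `T ∘ S` form the identity matrix,
as a `HasSum` statement on real parts. -/
private theorem key_hasSum {I : Type*} [DecidableEq I] [Fact ((1 : ℝ≥0∞) ≤ 1)]
    (T S : lp (fun _ : I => ℂ) 1 →L[ℂ] lp (fun _ : I => ℂ) 1)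
    (hTS : ∀ v, T (S v) = v)
    (hT : ∀ i j : I, ((T (lp.single 1 j 1)) i).im = 0)
    (hS : ∀ i j : I, ((S (lp.single 1 j 1)) i).im = 0) (i j : I) :
    HasSum (fun k => ((T (lp.single 1 k 1)) i).re * ((S (lp.single 1 j 1)) k).re)
      (if i = j then 1 else 0) := by
  have h := hasSum_entry T (S (lp.single 1 j 1)) i
  rw [hTS] at h
  have h2 := Complex.reCLM.hasSum h
  simp only [Complex.reCLM_apply, Complex.mul_re] at h2
  have hval : ((lp.single (E := fun _ : I => ℂ) 1 j 1) i).re = if i = j then 1 else 0 := by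
    by_cases hij : i = j
    · subst hij; rw [lp.single_apply_self]; simp
    · rw [lp.single_apply_ne _ _ _ hij]; simp [hij]
  rw [hval] at h2
  convert h2 using 2 with k
  rw [hS, hT]
  ring

theorem positive_inverse_implies_generalized_permutation
    {I : Type*} [Countable I] [DecidableEq I] [Fact ((1 : ℝ≥0∞) ≤ 1)]
    (T S : lp (fun _ : I => ℂ) 1 →L[ℂ] lp (fun _ : I => ℂ) 1)
    (hTS : ∀ v, T (S v) = v) (hST : ∀ v, S (T v) = v)
    (hT : ∀ i j : I, 0 ≤ ((T (lp.single 1 j 1)) i).re ∧ ((T (lp.single 1 j 1)) i).im = 0)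
    (hS : ∀ i j : I, 0 ≤ ((S (lp.single 1 j 1)) i).re ∧ ((S (lp.single 1 j 1)) i).im = 0) :
    ∃ (σ : Equiv.Perm I) (lam : I → ℝ), (∀ i, 0 < lam i) ∧
      ∀ i, T (lp.single 1 i 1) = (lam i : ℂ) • lp.single 1 (σ i) 1 := by
  set a : I → I → ℝ := fun i j => ((T (lp.single 1 j 1)) i).re with ha
  set b : I → I → ℝ := fun i j => ((S (lp.single 1 j 1)) i).re with hb
  have ha0 : ∀ i j, 0 ≤ a i j := fun i j => (hT i j).1
  have hb0 : ∀ i j, 0 ≤ b i j := fun i j => (hS i j).1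
  have hAB : ∀ i j, HasSum (fun k => a i k * b k j) (if i = j then 1 else 0) :=
    fun i j => key_hasSum T S hTS (fun i j => (hT i j).2) (fun i j => (hS i j).2) i j
  have hBA : ∀ i j, HasSum (fun k => b i k * a k j) (if i = j then 1 else 0) :=
    fun i j => key_hasSum S T hST (fun i j => (hS i j).2) (fun i j => (hT i j).2) i j
  -- off-diagonal vanishing
  have offAB : ∀ i j, i ≠ j → ∀ k, a i k * b k j = 0 := by
    intro i j hij k
    have h := hAB i j
    rw [if_neg hij] at h
    have hle : a i k * b k j ≤ 0 :=
      le_hasSum h k (fun m _ => mul_nonneg (ha0 i m) (hb0 m j))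
    exact le_antisymm hle (mul_nonneg (ha0 i k) (hb0 k j))
  have offBA : ∀ i j, i ≠ j → ∀ k, b i k * a k j = 0 := by
    intro i j hij k
    have h := hBA i j
    rw [if_neg hij] at h
    have hle : b i k * a k j ≤ 0 :=
      le_hasSum h k (fun m _ => mul_nonneg (hb0 i m) (ha0 m j))
    exact le_antisymm hle (mul_nonneg (hb0 i k) (ha0 k j))
  -- each column of `a` contains a positive entry paired with a positive entry of `b`
  have exCol : ∀ j, ∃ m, 0 < a m j ∧ 0 < b j m := by
    intro j
    by_contra hcon
    push_neg at hcon
    have hz : (fun k => b j k * a k j) = fun _ => 0 := by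
      funext k
      rcases lt_or_eq_of_le (ha0 k j) with hpos | heq
      · rw [(hcon k hpos).antisymm (hb0 j k), zero_mul]
      · rw [← heq, mul_zero]
    have h := hBA j j
    rw [if_pos rfl, hz] at h
    exact one_ne_zero (h.unique hasSum_zero)
  have exRow : ∀ i, ∃ m, 0 < a i m ∧ 0 < b m i := by
    intro i
    by_contra hcon
    push_neg at hcon
    have hz : (fun k => a i k * b k i) = fun _ => 0 := by
      funext k
      rcases lt_or_eq_of_le (ha0 i k) with hpos | heq
      · rw [(hcon k hpos).antisymm (hb0 k i), mul_zero]
      · rw [← heq, zero_mul]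
    have h := hAB i i
    rw [if_pos rfl, hz] at h
    exact one_ne_zero (h.unique hasSum_zero)
  choose σ₀ hσa hσb using exCol
  -- uniqueness of the positive entry in each column of `a`
  have huniq : ∀ j m, 0 < a m j → m = σ₀ j := by
    intro j m hm
    by_contra hne
    have := offAB m (σ₀ j) hne j
    exact absurd this (ne_of_gt (mul_pos hm (hσb j)))
  have hinj : Function.Injective σ₀ := by
    intro j j' hjj'
    by_contra hne
    exact absurd (offBA j j' hne (σ₀ j))
      (ne_of_gt (mul_pos (hσb j) (by rw [hjj']; exact hσa j')))
  have hsurj : Function.Surjective σ₀ := by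
    intro i
    obtain ⟨m, ham, -⟩ := exRow i
    exact ⟨m, (huniq m i ham).symm⟩
  refine ⟨Equiv.ofBijective σ₀ ⟨hinj, hsurj⟩, fun j => a (σ₀ j) j, fun j => hσa j, ?_⟩
  intro j
  apply lp.ext
  funext i
  rw [lp.coeFn_smul, Pi.smul_apply]
  simp only [Equiv.ofBijective_apply]
  show (T (lp.single 1 j 1) : I → ℂ) i = (a (σ₀ j) j : ℂ) • (lp.single 1 (σ₀ j) 1 : lp (fun _ : I => ℂ) 1) i
  by_cases hi : i = σ₀ j
  · subst hi
    rw [lp.single_apply_self]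
    apply Complex.ext
    · simp [ha]
    · simp [(hT (σ₀ j) j).2]
  · rw [lp.single_apply_ne _ _ _ hi]
    have hz : a i j = 0 := by
      rcases lt_or_eq_of_le (ha0 i j) with hpos | heq
      · exact absurd (huniq j i hpos) hi
      · exact heq.symm
    apply Complex.ext
    · simpa [ha] using hz
    · simp [(hT i j).2]
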